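/- Every codeword of a Gabidulin code Gab(n,k) over F_{q^m} (with n ≤ m), given by evaluating a nonzero linearized polynomial f of q-degree less than k at F_q-linearly independent points g_0,...,g_{n-1}, has rank weight at least n − k + 1; hence the minimum rank distance of Gab(n,k) is exactly d = n − k + 1. -/

import Mathlib

/-- The `F_q`-rank of a vector `a ∈ F_{q^m}^n` with respect to a fixed basis `β`. -/
noncomputable def rankq (Fq F : Type*) [Field Fq] [Field F] [Algebra Fq F]
    {m n : ℕ} (β : Module.Basis (Fin m) Fq F) (a : Fin n → F) : ℕ :=
  (Matrix.of fun (i : Fin m) (j : Fin n) => β.repr (a j) i).rank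

section Aux

open Module Submodule Polynomial Matrix

variable (Fq F : Type*) [Field Fq] [Fintype Fq] [Field F] [Fintype F] [Algebra Fq F]

/-- The `F_q`-linear map on `F` given by a linearized polynomial with coefficients `f`. -/
noncomputable def gabL {k : ℕ} (f : Fin k → F) : F →ₗ[Fq] F where
  toFun x := ∑ i : Fin k, f i * x ^ (Fintype.card Fq) ^ (i : ℕ)
  map_add' x y := by
    obtain ⟨p, hp⟩ := CharP.exists Fq
    obtain ⟨s, hps, hcard⟩ := FiniteField.card Fq p
    haveI : Fact p.Prime := ⟨hps⟩
    haveI : CharP F p :=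
      charP_of_injective_ringHom (algebraMap Fq F).injective p
    haveI : ExpChar F p := ExpChar.prime hps
    have key : ∀ z w : F, ∀ i : ℕ,
        (z + w) ^ (Fintype.card Fq) ^ i = z ^ (Fintype.card Fq) ^ i + w ^ (Fintype.card Fq) ^ i := by
      intro z w i
      simp only [hcard, ← pow_mul]
      exact add_pow_char_pow (p := p) z w (↑s * i)
    simp only [key, mul_add]
    rw [← Finset.sum_add_distrib]
  map_smul' c x := by
    simp only [RingHom.id_apply, Algebra.smul_def, Finset.mul_sum]
    refine Finset.sum_congr rfl fun i _ => ?_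
    rw [mul_pow, ← map_pow, FiniteField.pow_card_pow]
    ring

lemma gabL_apply {k : ℕ} (f : Fin k → F) (x : F) :
    gabL Fq F f x = ∑ i : Fin k, f i * x ^ (Fintype.card Fq) ^ (i : ℕ) := rfl

lemma rankq_eq_finrank_span {m n : ℕ} (β : Basis (Fin m) Fq F) (a : Fin n → F) :
    rankq Fq F β a = finrank Fq (span Fq (Set.range a)) := by
  rw [rankq, Matrix.rank_eq_finrank_span_cols]
  have h : Set.range (Matrix.of fun (i : Fin m) (j : Fin n) => β.repr (a j) i)ᵀ
      = ⇑β.equivFun '' Set.range a := by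
    rw [← Set.range_comp]
    refine congrArg Set.range (funext fun j => funext fun i => ?_)
    simp [Basis.equivFun_apply, Matrix.transpose]
  rw [show Set.range (Matrix.of fun (i : Fin m) (j : Fin n) => β.repr (a j) i).col
      = ⇑(β.equivFun : F →ₗ[Fq] (Fin m → Fq)) '' Set.range a from h, ← Submodule.map_span]
  exact LinearEquiv.finrank_map_eq β.equivFun _

lemma gab_ker_le {k : ℕ} (hk : 0 < k) (f : Fin k → F) (hf : f ≠ 0) :
    finrank Fq ↥(LinearMap.ker (gabL Fq F f)) ≤ k - 1 := by
  classical
  have hq : 1 < Fintype.card Fq := Fintype.one_lt_card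
  set P : Polynomial F :=
    ∑ i : Fin k, Polynomial.C (f i) * Polynomial.X ^ ((Fintype.card Fq) ^ (i : ℕ)) with hP
  obtain ⟨i0, hi0⟩ : ∃ i, f i ≠ 0 := by
    by_contra h; push_neg at h; exact hf (funext h)
  have hcoeff : P.coeff ((Fintype.card Fq) ^ (i0 : ℕ)) = f i0 := by
    rw [hP, Polynomial.finset_sum_coeff, Finset.sum_eq_single i0]
    · simp
    · intro i _ hne
      simp only [Polynomial.coeff_C_mul, Polynomial.coeff_X_pow]
      rw [if_neg, mul_zero]
      intro h
      exact hne (Fin.ext (Nat.pow_right_injective hq h.symm))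
    · intro h; exact absurd (Finset.mem_univ i0) h
  have hPne : P ≠ 0 := by
    intro h
    rw [h, Polynomial.coeff_zero] at hcoeff
    exact hi0 hcoeff.symm
  have hdeg : P.natDegree ≤ (Fintype.card Fq) ^ (k - 1) := by
    refine Polynomial.natDegree_sum_le_of_forall_le _ _ fun i _ => ?_
    refine le_trans (Polynomial.natDegree_C_mul_le _ _) ?_
    rw [Polynomial.natDegree_X_pow]
    exact Nat.pow_le_pow_right (le_of_lt hq) (by omega)
  have heval : ∀ x : F, gabL Fq F f x = P.eval x := by
    intro x
    rw [gabL_apply, hP, Polynomial.eval_finset_sum]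
    simp
  -- Every element of the kernel is a root of `P`.
  have hsub : (LinearMap.ker (gabL Fq F f) : Set F).toFinset ⊆ P.roots.toFinset := by
    intro x hx
    rw [Set.mem_toFinset] at hx
    rw [Multiset.mem_toFinset, Polynomial.mem_roots hPne, Polynomial.IsRoot, ← heval]
    exact hx
  have hcard : Fintype.card ↥(LinearMap.ker (gabL Fq F f)) ≤ (Fintype.card Fq) ^ (k - 1) := by
    have h1 : Fintype.card ↥(LinearMap.ker (gabL Fq F f))
        = (LinearMap.ker (gabL Fq F f) : Set F).toFinset.card := by
      rw [Set.toFinset_card]; rfl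
    rw [h1]
    calc (LinearMap.ker (gabL Fq F f) : Set F).toFinset.card
        ≤ P.roots.toFinset.card := Finset.card_le_card hsub
      _ ≤ Multiset.card P.roots := Multiset.toFinset_card_le _
      _ ≤ P.natDegree := Polynomial.card_roots' P
      _ ≤ (Fintype.card Fq) ^ (k - 1) := hdeg
  have hcard2 : Fintype.card ↥(LinearMap.ker (gabL Fq F f))
      = (Fintype.card Fq) ^ finrank Fq ↥(LinearMap.ker (gabL Fq F f)) :=
    card_eq_pow_finrank (K := Fq)
  rw [hcard2] at hcard
  exact (Nat.pow_le_pow_iff_right hq).mp hcard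

/-- Rank-nullity for the restricted map: rank of the codeword plus the dimension of
the intersection of the kernel with the span of the evaluation points equals `n`. -/
lemma gab_rank_formula {m n k : ℕ} (β : Basis (Fin m) Fq F) (g : Fin n → F)
    (hg : LinearIndependent Fq g) (f : Fin k → F) :
    rankq Fq F β (fun j => ∑ i : Fin k, f i * g j ^ (Fintype.card Fq) ^ (i : ℕ))
      + finrank Fq ↥(LinearMap.ker (gabL Fq F f) ⊓ span Fq (Set.range g)) = n := by
  classical
  haveI : Module.Finite Fq F := Module.Finite.of_basis β
  set V := span Fq (Set.range g) with hV
  set L := gabL Fq F f with hL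
  have hVrank : finrank Fq ↥V = n := by
    rw [hV, finrank_span_eq_card hg, Fintype.card_fin]
  have hsp : span Fq (Set.range fun j => ∑ i : Fin k, f i * g j ^ (Fintype.card Fq) ^ (i : ℕ))
      = Submodule.map L V := by
    have : (fun j => ∑ i : Fin k, f i * g j ^ (Fintype.card Fq) ^ (i : ℕ)) = ⇑L ∘ g := rfl
    rw [this, Set.range_comp, hV, Submodule.map_span]
  rw [rankq_eq_finrank_span, hsp]
  -- rank-nullity for `L.comp V.subtype`
  have h1 : finrank Fq ↥(LinearMap.range (L.comp V.subtype))
      + finrank Fq ↥(LinearMap.ker (L.comp V.subtype)) = n := by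
    rw [LinearMap.finrank_range_add_finrank_ker (L.comp V.subtype)]
    exact hVrank
  have h2 : LinearMap.range (L.comp V.subtype) = Submodule.map L V := by
    rw [LinearMap.range_comp, Submodule.range_subtype]
  have h3 : LinearMap.ker (L.comp V.subtype)
      = Submodule.comap V.subtype (LinearMap.ker L ⊓ V) := by
    rw [LinearMap.ker_comp]
    ext x
    simp [x.2]
  have h4 : finrank Fq ↥(LinearMap.ker (L.comp V.subtype))
      = finrank Fq ↥(LinearMap.ker L ⊓ V) := by
    rw [h3]
    exact LinearEquiv.finrank_eq (Submodule.comapSubtypeEquivOfLe inf_le_right)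
  rw [h2, h4] at h1
  exact h1

end Aux

/-- Every codeword of the Gabidulin code `Gab(n,k)` over `F_{q^m}` (`k < n ≤ m`),
obtained by evaluating a nonzero linearized polynomial `f` of q-degree `< k` at `F_q`-linearly
independent points `g_0, ..., g_{n-1}`, has rank weight at least `n − k + 1`; and this bound is
attained, so the minimum rank distance of `Gab(n,k)` is exactly `d = n − k + 1`. -/
theorem gabidulin_minimum_rank_distance (Fq F : Type*) [Field Fq] [Fintype Fq]
    [Field F] [Fintype F] [Algebra Fq F]
    (m n k : ℕ) (hk : 0 < k) (hkn : k < n) (hnm : n ≤ m)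
    (β : Module.Basis (Fin m) Fq F) (g : Fin n → F) (hg : LinearIndependent Fq g) :
    (∀ f : Fin k → F, f ≠ 0 →
        n - k + 1 ≤
          rankq Fq F β (fun j => ∑ i : Fin k, f i * g j ^ (Fintype.card Fq) ^ (i : ℕ))) ∧
    (∃ f : Fin k → F, f ≠ 0 ∧
        rankq Fq F β (fun j => ∑ i : Fin k, f i * g j ^ (Fintype.card Fq) ^ (i : ℕ)) =
          n - k + 1) := by
  classical
  haveI : Module.Finite Fq F := Module.Finite.of_basis β
  constructor
  · intro f hf
    have hform := gab_rank_formula Fq F β g hg f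
    have hker : Module.finrank Fq ↥(LinearMap.ker (gabL Fq F f)) ≤ k - 1 :=
      gab_ker_le Fq F hk f hf
    have hle : Module.finrank Fq ↥(LinearMap.ker (gabL Fq F f) ⊓ Submodule.span Fq (Set.range g))
        ≤ k - 1 :=
      le_trans (Submodule.finrank_mono inf_le_left) hker
    omega
  · -- construct `f` vanishing on `g 0, ..., g (k-2)`
    set emb : Fin (k - 1) → Fin n := fun j => ⟨(j : ℕ), by omega⟩ with hemb
    have hembinj : Function.Injective emb := by
      intro a b hab
      have : (emb a : ℕ) = (emb b : ℕ) := congrArg Fin.val hab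
      exact Fin.ext this
    set Φ : (Fin k → F) →ₗ[F] (Fin (k - 1) → F) :=
      LinearMap.pi (fun j => ∑ i : Fin k,
        (g (emb j) ^ (Fintype.card Fq) ^ (i : ℕ)) • LinearMap.proj i) with hΦ
    have hΦapply : ∀ (f : Fin k → F) (j : Fin (k - 1)),
        Φ f j = ∑ i : Fin k, g (emb j) ^ (Fintype.card Fq) ^ (i : ℕ) * f i := by
      intro f j
      simp [hΦ, LinearMap.pi_apply, LinearMap.sum_apply, smul_eq_mul]
    have hkerΦ : LinearMap.ker Φ ≠ ⊥ := by
      intro hbot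
      have hinj : Function.Injective Φ := LinearMap.ker_eq_bot.mp hbot
      have := LinearMap.finrank_le_finrank_of_injective hinj
      rw [Module.finrank_pi, Module.finrank_pi, Fintype.card_fin, Fintype.card_fin] at this
      omega
    obtain ⟨f, hfmem, hfne⟩ := Submodule.exists_mem_ne_zero_of_ne_bot hkerΦ
    have hfzero : ∀ j : Fin (k - 1), gabL Fq F f (g (emb j)) = 0 := by
      intro j
      have h0 : Φ f j = 0 := by
        rw [LinearMap.mem_ker.mp hfmem]; rfl
      rw [hΦapply] at h0
      rw [gabL_apply]
      rw [← h0]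
      exact Finset.sum_congr rfl fun i _ => mul_comm _ _
    refine ⟨f, hfne, ?_⟩
    have hform := gab_rank_formula Fq F β g hg f
    have hker : Module.finrank Fq ↥(LinearMap.ker (gabL Fq F f)) ≤ k - 1 :=
      gab_ker_le Fq F hk f hfne
    have hle : Module.finrank Fq ↥(LinearMap.ker (gabL Fq F f) ⊓ Submodule.span Fq (Set.range g))
        ≤ k - 1 :=
      le_trans (Submodule.finrank_mono inf_le_left) hker
    have hge : k - 1 ≤
        Module.finrank Fq ↥(LinearMap.ker (gabL Fq F f) ⊓ Submodule.span Fq (Set.range g)) := by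
      have hspanle : Submodule.span Fq (Set.range (g ∘ emb))
          ≤ LinearMap.ker (gabL Fq F f) ⊓ Submodule.span Fq (Set.range g) := by
        refine le_inf ?_ (Submodule.span_mono (Set.range_comp_subset_range emb g))
        rw [Submodule.span_le]
        rintro x ⟨j, rfl⟩
        exact hfzero j
      have hspanrank : Module.finrank Fq ↥(Submodule.span Fq (Set.range (g ∘ emb))) = k - 1 := by
        rw [finrank_span_eq_card (hg.comp emb hembinj), Fintype.card_fin]
      rw [← hspanrank]
      exact Submodule.finrank_mono hspanle
    omega
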